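/- Let L be a flat bounded lattice, let α ∈ L \ {⊥, ⊤}, and let d₁, d₂ ∈ L be distinct elements with d₁, d₂ ∉ {⊥, ⊤, α}. Then for every a ∈ L: ((a ⊓ α) ⊔ d₁) ⊓ ((a ⊓ α) ⊔ d₂) equals ⊤ if α ≤ a, and equals ⊥ otherwise. In other words, the unary polynomial function a ↦ ((a ⊓ α) ⊔ d₁) ⊓ ((a ⊓ α) ⊔ d₂) is the monotone characteristic function of {α}. -/
import Mathlib


universe u

open scoped Classical

/-- In a flat bounded lattice, the unary polynomial
`a ↦ ((a ⊓ α) ⊔ d₁) ⊓ ((a ⊓ α) ⊔ d₂)` (for `α ∉ {⊥, ⊤}` and distinct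
`d₁, d₂ ∉ {⊥, ⊤, α}`) is the monotone characteristic function of `{α}`. -/
theorem stmt11 {L : Type u} [Lattice L] [BoundedOrder L]
    (hbt : (⊥ : L) ≠ ⊤)
    (hflat : ∀ a b : L, a ≤ b → a = ⊥ ∨ b = ⊤ ∨ a = b)
    (α : L) (hα : α ∉ ({⊥, ⊤} : Set L))
    (d₁ d₂ : L) (hd : d₁ ≠ d₂)
    (hd₁ : d₁ ∉ ({⊥, ⊤, α} : Set L)) (hd₂ : d₂ ∉ ({⊥, ⊤, α} : Set L))
    (a : L) :
    ((a ⊓ α) ⊔ d₁) ⊓ ((a ⊓ α) ⊔ d₂) = if α ≤ a then ⊤ else ⊥ := by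
  simp only [Set.mem_insert_iff, Set.mem_singleton_iff, not_or] at hα hd₁ hd₂
  obtain ⟨hαb, hαt⟩ := hα
  obtain ⟨h1b, h1t, h1α⟩ := hd₁
  obtain ⟨h2b, h2t, h2α⟩ := hd₂
  split_ifs with h
  · have hinf : a ⊓ α = α := inf_eq_right.mpr h
    rw [hinf]
    have t1 : α ⊔ d₁ = ⊤ := by
      rcases hflat α (α ⊔ d₁) le_sup_left with h' | h' | h'
      · exact absurd h' hαb
      · exact h'
      · have : d₁ ≤ α := by rw [h']; exact le_sup_right
        rcases hflat d₁ α this with h'' | h'' | h'' <;> [exact absurd h'' h1b;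
          exact absurd h'' hαt; exact absurd h'' h1α]
    have t2 : α ⊔ d₂ = ⊤ := by
      rcases hflat α (α ⊔ d₂) le_sup_left with h' | h' | h'
      · exact absurd h' hαb
      · exact h'
      · have : d₂ ≤ α := by rw [h']; exact le_sup_right
        rcases hflat d₂ α this with h'' | h'' | h'' <;> [exact absurd h'' h2b;
          exact absurd h'' hαt; exact absurd h'' h2α]
    rw [t1, t2, top_inf_eq]
  · have hinf : a ⊓ α = ⊥ := by
      rcases hflat (a ⊓ α) α inf_le_right with h' | h' | h'
      · exact h'
      · exact absurd h' hαt
      · exact absurd (h' ▸ inf_le_left) h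
    rw [hinf, bot_sup_eq, bot_sup_eq]
    rcases hflat (d₁ ⊓ d₂) d₁ inf_le_left with h' | h' | h'
    · exact h'
    · exact absurd h' h1t
    · have : d₁ ≤ d₂ := h' ▸ inf_le_right
      rcases hflat d₁ d₂ this with h'' | h'' | h'' <;> [exact absurd h'' h1b;
        exact absurd h'' h2t; exact absurd h'' hd]
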